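/- Key leakage lemma: let F : (\{0,1\}^\lambda)^n \to \{0,1\}^s be arbitrary, X uniform over (\{0,1\}^\lambda)^n, Z = F(X), G uniform over \mathcal{G}^n for a universal hash family \mathcal{G} with range \{0,1\}^{\lambda'}, independent of X. Given \delta, \gamma > 0 and s' > s with (1-\delta)\lambda > \lambda' + \log_2 n + 1, and assuming the dense-decomposition lemma (any conditioned source with deficiency at most s' is \gamma-close to a convex combination of (k, 1-\delta)-dense sources for k = (s' + \log_2(1/\gamma))/(\delta\lambda)), there exists a family V_{G,Z} of convex combinations of k-bit-fixing (n, 2^{\lambda'})-sources such that \Delta[(G, Z, G(X)), (G, Z, V_{G,Z})] \leq \sqrt{2^{-(1-\delta)\lambda + \lambda' + \log_2 n}} + \gamma + 2^{s - s'}. -/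

import Mathlib

open Finset Real

/-- A `k`-bit-fixing `(n, 2^λ')`-source (with real parameter `k`). -/
def IsBitFixingR {n lam' : ℕ} (k : ℝ) (p : (Fin n → (Fin lam' → Bool)) → ℝ) : Prop :=
  ∃ J : Finset (Fin n), ((n : ℝ) - J.card ≤ k) ∧ ∃ w : Fin n → (Fin lam' → Bool),
    ∀ x, p x = if ∀ i ∉ J, x i = w i then (((2 : ℝ) ^ lam') ^ J.card)⁻¹ else 0

/-- A convex combination of `k`-bit-fixing sources. -/
def IsConvexCombBitFixing {n lam' : ℕ} (k : ℝ)
    (V : (Fin n → (Fin lam' → Bool)) → ℝ) : Prop :=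
  ∃ (m : ℕ) (wt : Fin m → ℝ) (q : Fin m → (Fin n → (Fin lam' → Bool)) → ℝ),
    (∀ i, 0 ≤ wt i) ∧ (∑ i, wt i = 1) ∧ (∀ i, IsBitFixingR k (q i)) ∧
    ∀ x, V x = ∑ i, wt i * q i x

/-- `(1-δ)`-density on a set `J` of coordinates. -/
def IsDenseOn {n lam : ℕ} (δ : ℝ) (J : Finset (Fin n))
    (p : (Fin n → (Fin lam → Bool)) → ℝ) : Prop :=
  ∀ I ⊆ J, ∀ v : Fin n → (Fin lam → Bool),
    (∑ x, if ∀ i ∈ I, x i = v i then p x else 0)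
      ≤ (2 : ℝ) ^ (-((1 - δ) * I.card * lam))

/-- A `(k, 1-δ)`-dense source. -/
def IsKDense {n lam : ℕ} (k δ : ℝ) (p : (Fin n → (Fin lam → Bool)) → ℝ) : Prop :=
  ∃ J : Finset (Fin n), ((n : ℝ) - J.card ≤ k) ∧
    (∃ w : Fin n → (Fin lam → Bool), ∀ x, p x ≠ 0 → ∀ i ∉ J, x i = w i) ∧
    IsDenseOn δ J p

/-- A convex combination of `(k, 1-δ)`-dense sources (each a distribution). -/
def IsConvexCombKDense {n lam : ℕ} (k δ : ℝ)
    (W : (Fin n → (Fin lam → Bool)) → ℝ) : Prop :=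
  ∃ (m : ℕ) (wt : Fin m → ℝ) (q : Fin m → (Fin n → (Fin lam → Bool)) → ℝ),
    (∀ i, 0 ≤ wt i) ∧ (∑ i, wt i = 1) ∧
    (∀ i, (∀ x, 0 ≤ q i x) ∧ (∑ x, q i x = 1) ∧ IsKDense k δ (q i)) ∧
    ∀ x, W x = ∑ i, wt i * q i x

private lemma sum_fun_prod {α β M : Type*} [Fintype α] [DecidableEq α] [Fintype β]
    [CommSemiring M] (f : α → β → M) :
    ∑ g : α → β, ∏ i, f i (g i) = ∏ i, ∑ b, f i b := by
  rw [← Finset.sum_prod_piFinset Finset.univ f]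
  simp [Fintype.piFinset_univ]

private lemma slice_sum {n lam' : ℕ} (J : Finset (Fin n)) (w' : Fin n → (Fin lam' → Bool)) :
    ∑ u : Fin n → (Fin lam' → Bool), (if ∀ j ∉ J, u j = w' j then (1:ℝ) else 0)
      = ((2:ℝ)^lam')^J.card := by
  have key : ∀ u : Fin n → (Fin lam' → Bool),
      (if ∀ j ∉ J, u j = w' j then (1:ℝ) else 0)
        = ∏ j, (if j ∈ J then (1:ℝ) else if u j = w' j then 1 else 0) := by
    intro u
    by_cases h : ∀ j ∉ J, u j = w' j
    · rw [if_pos h]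
      refine (Finset.prod_eq_one fun j _ => ?_).symm
      by_cases hj : j ∈ J
      · simp [hj]
      · simp [hj, h j hj]
    · rw [if_neg h]
      push_neg at h
      obtain ⟨j, hj, hne⟩ := h
      refine (Finset.prod_eq_zero (Finset.mem_univ j) ?_).symm
      simp [hj, hne]
  have step : ∑ u : Fin n → (Fin lam' → Bool), (if ∀ j ∉ J, u j = w' j then (1:ℝ) else 0)
      = ∏ j, ∑ a : Fin lam' → Bool, (if j ∈ J then (1:ℝ) else if a = w' j then 1 else 0) := by
    rw [Finset.sum_congr rfl fun u _ => key u]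
    exact sum_fun_prod (fun j a => if j ∈ J then (1:ℝ) else if a = w' j then 1 else 0)
  rw [step]
  have : ∀ j : Fin n, (∑ a : Fin lam' → Bool,
      (if j ∈ J then (1:ℝ) else if a = w' j then 1 else 0))
      = if j ∈ J then ((2:ℝ)^lam') else 1 := by
    intro j
    by_cases hj : j ∈ J
    · simp [hj, Finset.card_univ]
    · simp [hj]
  rw [Finset.prod_congr rfl fun j _ => this j, Finset.prod_ite_mem, Finset.univ_inter,
    Finset.prod_const]

private lemma sum_ind_eq {β : Type*} [Fintype β] [DecidableEq β] (c d : β) :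
    ∑ u : β, (if c = u then (1:ℝ) else 0) * (if d = u then 1 else 0)
      = if c = d then 1 else 0 := by
  have h : ∀ u : β, (if c = u then (1:ℝ) else 0) * (if d = u then 1 else 0)
      = if c = u then (if d = u then (1:ℝ) else 0) else 0 := by
    intro u; by_cases h : c = u <;> simp [h]
  rw [Finset.sum_congr rfl fun u _ => h u, Finset.sum_ite_eq]
  simp [eq_comm]

private lemma avg_sqrt_le {ι : Type*} [Fintype ι] (p t : ι → ℝ) (hp : ∀ i, 0 ≤ p i)
    (ht : ∀ i, 0 ≤ t i) (hp1 : ∑ i, p i = 1) :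
    ∑ i, p i * Real.sqrt (t i) ≤ Real.sqrt (∑ i, p i * t i) := by
  have h := Finset.sum_sq_le_sum_mul_sum_of_sq_eq_mul Finset.univ
    (f := p) (g := fun i => p i * t i) (r := fun i => p i * Real.sqrt (t i))
    (fun i _ => hp i) (fun i _ => mul_nonneg (hp i) (ht i))
    (fun i _ => by rw [mul_pow, Real.sq_sqrt (ht i)]; ring)
  rw [hp1, one_mul] at h
  have h0 : 0 ≤ ∑ i, p i * Real.sqrt (t i) :=
    Finset.sum_nonneg fun i _ => mul_nonneg (hp i) (Real.sqrt_nonneg _)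
  calc ∑ i, p i * Real.sqrt (t i)
      = Real.sqrt ((∑ i, p i * Real.sqrt (t i))^2) := (Real.sqrt_sq h0).symm
    _ ≤ _ := Real.sqrt_le_sqrt h

private lemma one_add_pow_le {ε : ℝ} (hε : 0 ≤ ε) :
    ∀ m : ℕ, (m : ℝ) * ε ≤ 1/2 → (1+ε)^m ≤ 1 + 2*m*ε := by
  intro m
  induction m with
  | zero => simp
  | succ m ih =>
    intro h
    push_cast
    have hc : ((m:ℝ)+1) * ε ≤ 1/2 := by push_cast at h; linarith
    have hm : (m:ℝ) * ε ≤ 1/2 := by nlinarith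
    have h2 : 2*(m:ℝ)*ε ≤ 1 := by linarith
    have hih := ih hm
    have h1 : (0:ℝ) ≤ 1 + ε := by linarith
    calc (1+ε)^(m+1) = (1+ε)^m * (1+ε) := by ring
      _ ≤ (1 + 2*(m:ℝ)*ε) * (1+ε) := by nlinarith [pow_nonneg h1 m]
      _ ≤ 1 + 2*((m:ℝ)+1)*ε := by nlinarith


set_option maxHeartbeats 2000000 in
private lemma core {n lam lam' : ℕ} {H : Type*} [Fintype H] [Nonempty H]
    (δ : ℝ) (ev : H → (Fin lam → Bool) → (Fin lam' → Bool))
    (huniv : ∀ x y : Fin lam → Bool, x ≠ y →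
      ((Finset.univ.filter (fun g : H => ev g x = ev g y)).card : ℝ)
        ≤ (Fintype.card H : ℝ) * (2 : ℝ) ^ (-(lam' : ℝ)))
    (hne : (n:ℝ) * (2:ℝ)^((lam':ℝ) - (1-δ)*lam) ≤ 1/2)
    (q : (Fin n → (Fin lam → Bool)) → ℝ) (hq0 : ∀ x, 0 ≤ q x) (hq1 : ∑ x, q x = 1)
    (J : Finset (Fin n)) (w : Fin n → Fin lam → Bool)
    (hsupp : ∀ x, q x ≠ 0 → ∀ j ∉ J, x j = w j)
    (hdense : IsDenseOn δ J q) :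
    ((Fintype.card H : ℝ)^n)⁻¹ * ∑ g : Fin n → H, (1/2) * ∑ u : Fin n → (Fin lam' → Bool),
      |(∑ x, q x * (if ∀ i, ev (g i) (x i) = u i then (1:ℝ) else 0))
        - (if ∀ j ∉ J, u j = ev (g j) (w j) then (((2:ℝ)^lam')^J.card)⁻¹ else 0)|
    ≤ Real.sqrt ((n:ℝ) * (2:ℝ)^((lam':ℝ) - (1-δ)*lam)) := by
  classical
  set CH : ℝ := (Fintype.card H : ℝ) with hCHdef
  set M : ℝ := ((2:ℝ)^lam')^J.card with hMdef
  set a : ℝ := (2:ℝ)^(-((1-δ)*(lam:ℝ))) with hadef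
  set b : ℝ := (2:ℝ)^(-(lam':ℝ)) with hbdef
  set ε : ℝ := (2:ℝ)^((lam':ℝ) - (1-δ)*(lam:ℝ)) with hεdef
  have hCH : (0:ℝ) < CH := by
    rw [hCHdef]; exact_mod_cast Fintype.card_pos
  have hCHn : (0:ℝ) < CH^n := pow_pos hCH n
  have hb : (0:ℝ) < b := Real.rpow_pos_of_pos two_pos _
  have ha : (0:ℝ) ≤ a := (Real.rpow_pos_of_pos two_pos _).le
  have hε : (0:ℝ) ≤ ε := (Real.rpow_pos_of_pos two_pos _).le
  have hM : (0:ℝ) < M := pow_pos (pow_pos two_pos _) _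
  have hbinv : b = ((2:ℝ)^lam')⁻¹ := by
    rw [hbdef, ← Real.rpow_natCast 2 lam', ← Real.rpow_neg (by norm_num)]
  have hab : a = ε * b := by
    rw [hadef, hεdef, hbdef, ← Real.rpow_add two_pos]
    congr 1; ring
  set P : (Fin n → H) → (Fin n → (Fin lam' → Bool)) → ℝ :=
    fun g u => ∑ x, q x * (if ∀ i, ev (g i) (x i) = u i then (1:ℝ) else 0) with hPdef
  set Col : (Fin n → H) → ℝ := fun g => ∑ u, (P g u)^2 with hColdef
  set T : (Fin n → H) → ℝ := fun g => M * Col g - 1 with hTdef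
  -- sum of P is 1
  have hindsum : ∀ (g : Fin n → H) (x : Fin n → Fin lam → Bool),
      ∑ u : Fin n → (Fin lam' → Bool), (if ∀ i, ev (g i) (x i) = u i then (1:ℝ) else 0) = 1 := by
    intro g x
    have h1 : ∀ u : Fin n → (Fin lam' → Bool),
        (if ∀ i, ev (g i) (x i) = u i then (1:ℝ) else 0)
          = (if (fun i => ev (g i) (x i)) = u then (1:ℝ) else 0) := by
      intro u
      by_cases h : (fun i => ev (g i) (x i)) = u
      · rw [if_pos h, if_pos (fun i => congrFun h i)]
      · rw [if_neg h, if_neg (fun hh => h (funext hh))]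
    rw [Finset.sum_congr rfl fun u _ => h1 u, Finset.sum_ite_eq]
    simp
  have hPsum : ∀ g, ∑ u, P g u = 1 := by
    intro g
    simp only [hPdef]
    rw [Finset.sum_comm]
    calc ∑ x, ∑ u : Fin n → (Fin lam' → Bool),
          q x * (if ∀ i, ev (g i) (x i) = u i then (1:ℝ) else 0)
        = ∑ x, q x * ∑ u : Fin n → (Fin lam' → Bool),
            (if ∀ i, ev (g i) (x i) = u i then (1:ℝ) else 0) :=
          Finset.sum_congr rfl fun x _ => (Finset.mul_sum _ _ _).symm
      _ = ∑ x, q x * 1 := Finset.sum_congr rfl fun x _ => by rw [hindsum g x]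
      _ = 1 := by simpa using hq1
  -- per-g Cauchy-Schwarz bound
  have hperg : ∀ g : Fin n → H, 0 ≤ T g ∧ ∑ u, |P g u
      - (if ∀ j ∉ J, u j = ev (g j) (w j) then M⁻¹ else 0)| ≤ Real.sqrt (T g) := by
    intro g
    set S : Finset (Fin n → (Fin lam' → Bool)) :=
      Finset.univ.filter (fun u => ∀ j ∉ J, u j = ev (g j) (w j)) with hSdef
    have hScard : (S.card : ℝ) = M := by
      rw [hSdef, ← Finset.sum_boole, slice_sum J (fun j => ev (g j) (w j)), hMdef]
    have hPoff : ∀ u ∉ S, P g u = 0 := by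
      intro u hu
      have hu' : ¬ ∀ j ∉ J, u j = ev (g j) (w j) := by
        intro hcon; exact hu (Finset.mem_filter.mpr ⟨Finset.mem_univ u, hcon⟩)
      simp only [hPdef]
      refine Finset.sum_eq_zero fun x _ => ?_
      by_cases hqx : q x = 0
      · rw [hqx, zero_mul]
      · by_cases hind : ∀ i, ev (g i) (x i) = u i
        · exfalso
          exact hu' fun j hj => ((hind j).symm).trans (by rw [hsupp x hqx j hj])
        · rw [if_neg hind, mul_zero]
    have hbfoff : ∀ u, u ∉ S →
        (if ∀ j ∉ J, u j = ev (g j) (w j) then M⁻¹ else (0:ℝ)) = 0 := by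
      intro u hu
      rw [if_neg]
      intro hcon; exact hu (Finset.mem_filter.mpr ⟨Finset.mem_univ u, hcon⟩)
    have hbfon : ∀ u ∈ S, (if ∀ j ∉ J, u j = ev (g j) (w j) then M⁻¹ else (0:ℝ)) = M⁻¹ := by
      intro u hu
      rw [if_pos (Finset.mem_filter.mp hu).2]
    have hext : ∀ f : (Fin n → (Fin lam' → Bool)) → ℝ,
        (∀ u ∉ S, f u = 0) → ∑ u ∈ S, f u = ∑ u, f u :=
      fun f hf => Finset.sum_subset (Finset.subset_univ S) (fun u _ hu => hf u hu)
    have hPS : ∑ u ∈ S, P g u = 1 := by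
      rw [hext _ hPoff]; exact hPsum g
    have hColS : ∑ u ∈ S, (P g u)^2 = Col g := by
      rw [hColdef, hext _ (fun u hu => by rw [hPoff u hu]; ring)]
    have hexpand : ∑ u ∈ S, (P g u - M⁻¹)^2 = Col g - M⁻¹ := by
      have h1 : ∀ u ∈ S, (P g u - M⁻¹)^2
          = (P g u)^2 - 2*M⁻¹*(P g u) + M⁻¹^2 := fun u _ => by ring
      rw [Finset.sum_congr rfl h1]
      rw [Finset.sum_add_distrib, Finset.sum_sub_distrib, ← Finset.mul_sum, hPS, hColS,
        Finset.sum_const, nsmul_eq_mul, hScard]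
      field_simp
      ring
    have hTalt : T g = M * ∑ u ∈ S, (P g u - M⁻¹)^2 := by
      rw [hexpand, hTdef]
      field_simp
    have hTnn : 0 ≤ T g := by
      rw [hTalt]
      exact mul_nonneg hM.le (Finset.sum_nonneg fun u _ => sq_nonneg _)
    refine ⟨hTnn, ?_⟩
    have habs : ∑ u, |P g u - (if ∀ j ∉ J, u j = ev (g j) (w j) then M⁻¹ else 0)|
        = ∑ u ∈ S, |P g u - M⁻¹| := by
      rw [← hext (fun u => |P g u - (if ∀ j ∉ J, u j = ev (g j) (w j) then M⁻¹ else 0)|)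
        (fun u hu => by rw [hPoff u hu, hbfoff u hu]; simp)]
      exact Finset.sum_congr rfl fun u hu => by rw [hbfon u hu]
    have hcs := Finset.sum_mul_sq_le_sq_mul_sq S (fun _ => (1:ℝ))
      (fun u => |P g u - M⁻¹|)
    simp only [one_pow, one_mul, sq_abs, Finset.sum_const, nsmul_eq_mul, mul_one] at hcs
    have hsq : (∑ u ∈ S, |P g u - M⁻¹|)^2 ≤ T g := by
      calc (∑ u ∈ S, |P g u - M⁻¹|)^2 ≤ (S.card : ℝ) * ∑ u ∈ S, (P g u - M⁻¹)^2 := hcs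
        _ = M * ∑ u ∈ S, (P g u - M⁻¹)^2 := by rw [hScard]
        _ = T g := hTalt.symm
    rw [habs]
    have h0 : 0 ≤ ∑ u ∈ S, |P g u - M⁻¹| := Finset.sum_nonneg fun u _ => abs_nonneg _
    calc ∑ u ∈ S, |P g u - M⁻¹|
        = Real.sqrt ((∑ u ∈ S, |P g u - M⁻¹|)^2) := (Real.sqrt_sq h0).symm
      _ ≤ Real.sqrt (T g) := Real.sqrt_le_sqrt hsq
  have hTnn : ∀ g, 0 ≤ T g := fun g => (hperg g).1
  have hDle : ∀ g, ∑ u, |P g u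
      - (if ∀ j ∉ J, u j = ev (g j) (w j) then M⁻¹ else 0)| ≤ Real.sqrt (T g) :=
    fun g => (hperg g).2
  -- average collision bound
  have hind2 : ∀ (g : Fin n → H) (x y : Fin n → Fin lam → Bool),
      ∑ u : Fin n → (Fin lam' → Bool),
        (if ∀ i, ev (g i) (x i) = u i then (1:ℝ) else 0)
          * (if ∀ i, ev (g i) (y i) = u i then (1:ℝ) else 0)
      = ∏ i, (if ev (g i) (x i) = ev (g i) (y i) then (1:ℝ) else 0) := by
    intro g x y
    have h1 : ∀ u : Fin n → (Fin lam' → Bool),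
        (if ∀ i, ev (g i) (x i) = u i then (1:ℝ) else 0)
          * (if ∀ i, ev (g i) (y i) = u i then (1:ℝ) else 0)
        = (if (fun i => ev (g i) (x i)) = u then (1:ℝ) else 0)
          * (if (fun i => ev (g i) (y i)) = u then (1:ℝ) else 0) := by
      intro u
      congr 1
      · by_cases h : (fun i => ev (g i) (x i)) = u
        · rw [if_pos (fun i => congrFun h i), if_pos h]
        · rw [if_neg (fun hh => h (funext hh)), if_neg h]
      · by_cases h : (fun i => ev (g i) (y i)) = u
        · rw [if_pos (fun i => congrFun h i), if_pos h]
        · rw [if_neg (fun hh => h (funext hh)), if_neg h]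
    rw [Finset.sum_congr rfl fun u _ => h1 u,
      sum_ind_eq (fun i => ev (g i) (x i)) (fun i => ev (g i) (y i))]
    rw [Finset.prod_boole]
    by_cases h : (fun i => ev (g i) (x i)) = (fun i => ev (g i) (y i))
    · rw [if_pos h, if_pos (fun i _ => congrFun h i)]
    · rw [if_neg h, if_neg (fun hh => h (funext (fun i => hh i (Finset.mem_univ i))))]
  have hColExp : ∀ g : Fin n → H, Col g = ∑ x, ∑ y, (q x * q y) *
      ∏ i, (if ev (g i) (x i) = ev (g i) (y i) then (1:ℝ) else 0) := by
    intro g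
    simp only [hColdef, hPdef]
    calc ∑ u : Fin n → (Fin lam' → Bool),
          (∑ x, q x * (if ∀ i, ev (g i) (x i) = u i then (1:ℝ) else 0))^2
        = ∑ u : Fin n → (Fin lam' → Bool), ∑ x, ∑ y,
            (q x * (if ∀ i, ev (g i) (x i) = u i then (1:ℝ) else 0))
              * (q y * (if ∀ i, ev (g i) (y i) = u i then (1:ℝ) else 0)) := by
          refine Finset.sum_congr rfl fun u _ => ?_
          rw [sq, Finset.sum_mul_sum]
      _ = ∑ x, ∑ y, ∑ u : Fin n → (Fin lam' → Bool),
            (q x * (if ∀ i, ev (g i) (x i) = u i then (1:ℝ) else 0))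
              * (q y * (if ∀ i, ev (g i) (y i) = u i then (1:ℝ) else 0)) := by
          rw [Finset.sum_comm]
          exact Finset.sum_congr rfl fun x _ => Finset.sum_comm
      _ = ∑ x, ∑ y, (q x * q y) * ∑ u : Fin n → (Fin lam' → Bool),
            (if ∀ i, ev (g i) (x i) = u i then (1:ℝ) else 0)
              * (if ∀ i, ev (g i) (y i) = u i then (1:ℝ) else 0) := by
          refine Finset.sum_congr rfl fun x _ => Finset.sum_congr rfl fun y _ => ?_
          rw [Finset.mul_sum]
          exact Finset.sum_congr rfl fun u _ => by ring
      _ = ∑ x, ∑ y, (q x * q y) *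
            ∏ i, (if ev (g i) (x i) = ev (g i) (y i) then (1:ℝ) else 0) := by
          refine Finset.sum_congr rfl fun x _ => Finset.sum_congr rfl fun y _ => ?_
          rw [hind2 g x y]
  have hsumCol : ∑ g : Fin n → H, Col g = ∑ x, ∑ y, (q x * q y) *
      ∏ i, ((Finset.univ.filter (fun h : H => ev h (x i) = ev h (y i))).card : ℝ) := by
    rw [Finset.sum_congr rfl fun g _ => hColExp g]
    rw [Finset.sum_comm]
    refine Finset.sum_congr rfl fun x _ => ?_
    rw [Finset.sum_comm]
    refine Finset.sum_congr rfl fun y _ => ?_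
    rw [← Finset.mul_sum]
    congr 1
    rw [sum_fun_prod (fun i h => if ev h (x i) = ev h (y i) then (1:ℝ) else 0)]
    exact Finset.prod_congr rfl fun i _ => by rw [Finset.sum_boole]
  have hprod_le : ∀ x y : Fin n → Fin lam → Bool, q x ≠ 0 → q y ≠ 0 →
      (CH^n)⁻¹ * ∏ i, ((Finset.univ.filter (fun h : H => ev h (x i) = ev h (y i))).card : ℝ)
        ≤ ∏ i ∈ J, ((if x i = y i then (1:ℝ) else 0) + b) := by
    intro x y hx hy
    have hfac : (CH^n)⁻¹ * ∏ i, ((Finset.univ.filter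
        (fun h : H => ev h (x i) = ev h (y i))).card : ℝ)
        = ∏ i, (CH⁻¹ * ((Finset.univ.filter
            (fun h : H => ev h (x i) = ev h (y i))).card : ℝ)) := by
      rw [Finset.prod_mul_distrib, Finset.prod_const, Finset.card_univ, Fintype.card_fin,
        inv_pow]
    rw [hfac]
    have hf0 : ∀ i : Fin n, 0 ≤ CH⁻¹ * ((Finset.univ.filter
        (fun h : H => ev h (x i) = ev h (y i))).card : ℝ) := by
      intro i
      positivity
    have hf1 : ∀ i : Fin n, CH⁻¹ * ((Finset.univ.filter
        (fun h : H => ev h (x i) = ev h (y i))).card : ℝ) ≤ 1 := by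
      intro i
      rw [inv_mul_le_iff₀ hCH, mul_one]
      calc ((Finset.univ.filter (fun h : H => ev h (x i) = ev h (y i))).card : ℝ)
          ≤ ((Finset.univ : Finset H).card : ℝ) := by
            exact_mod_cast Finset.card_le_card (Finset.filter_subset _ _)
        _ = CH := by rw [Finset.card_univ, hCHdef]
    have hfb : ∀ i : Fin n, CH⁻¹ * ((Finset.univ.filter
        (fun h : H => ev h (x i) = ev h (y i))).card : ℝ)
        ≤ (if x i = y i then (1:ℝ) else 0) + b := by
      intro i
      by_cases h : x i = y i
      · rw [if_pos h]
        exact le_add_of_le_of_nonneg (hf1 i) hb.le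
      · rw [if_neg h, zero_add]
        rw [inv_mul_le_iff₀ hCH]
        exact huniv (x i) (y i) h
    calc ∏ i, (CH⁻¹ * ((Finset.univ.filter
          (fun h : H => ev h (x i) = ev h (y i))).card : ℝ))
        = (∏ i ∈ J, (CH⁻¹ * ((Finset.univ.filter
            (fun h : H => ev h (x i) = ev h (y i))).card : ℝ)))
          * ∏ i ∈ Jᶜ, (CH⁻¹ * ((Finset.univ.filter
            (fun h : H => ev h (x i) = ev h (y i))).card : ℝ)) :=
          (Finset.prod_mul_prod_compl J _).symm
      _ ≤ (∏ i ∈ J, ((if x i = y i then (1:ℝ) else 0) + b)) * 1 := by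
          refine mul_le_mul ?_ ?_ (Finset.prod_nonneg fun i _ => hf0 i)
            (Finset.prod_nonneg fun i _ => ?_)
          · exact Finset.prod_le_prod (fun i _ => hf0 i) (fun i _ => hfb i)
          · exact Finset.prod_le_one (fun i _ => hf0 i) (fun i _ => hf1 i)
          · by_cases h : x i = y i <;> simp [h, hb.le]
            · positivity
      _ = ∏ i ∈ J, ((if x i = y i then (1:ℝ) else 0) + b) := mul_one _
  have hapow : ∀ t : Finset (Fin n), t ⊆ J →
      (2:ℝ) ^ (-((1 - δ) * (t.card:ℝ) * lam)) = a ^ t.card := by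
    intro t _
    rw [hadef, ← Real.rpow_natCast ((2:ℝ)^(-((1-δ)*(lam:ℝ)))) t.card,
      ← Real.rpow_mul (by norm_num : (0:ℝ) ≤ 2)]
    congr 1
    ring
  have key : (CH^n)⁻¹ * ∑ g : Fin n → H, Col g ≤ (a+b)^J.card := by
    rw [hsumCol, Finset.mul_sum]
    have step1 : ∀ x, (CH^n)⁻¹ * ∑ y, (q x * q y) *
        ∏ i, ((Finset.univ.filter (fun h : H => ev h (x i) = ev h (y i))).card : ℝ)
        = ∑ y, (q x * q y) * ((CH^n)⁻¹ *
            ∏ i, ((Finset.univ.filter (fun h : H => ev h (x i) = ev h (y i))).card : ℝ)) := by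
      intro x
      rw [Finset.mul_sum]
      exact Finset.sum_congr rfl fun y _ => by ring
    rw [Finset.sum_congr rfl fun x _ => step1 x]
    have step2 : ∑ x, ∑ y, (q x * q y) * ((CH^n)⁻¹ *
        ∏ i, ((Finset.univ.filter (fun h : H => ev h (x i) = ev h (y i))).card : ℝ))
        ≤ ∑ x, ∑ y, (q x * q y) * ∏ i ∈ J, ((if x i = y i then (1:ℝ) else 0) + b) := by
      refine Finset.sum_le_sum fun x _ => Finset.sum_le_sum fun y _ => ?_
      by_cases hx : q x = 0
      · rw [hx]; simp
      by_cases hy : q y = 0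
      · rw [hy]; simp
      exact mul_le_mul_of_nonneg_left (hprod_le x y hx hy)
        (mul_nonneg (hq0 x) (hq0 y))
    refine le_trans step2 ?_
    have step3 : ∀ (x y : Fin n → Fin lam → Bool),
        (q x * q y) * ∏ i ∈ J, ((if x i = y i then (1:ℝ) else 0) + b)
        = ∑ t ∈ J.powerset, (q x * b ^ (J \ t).card)
            * (if ∀ i ∈ t, y i = x i then q y else 0) := by
      intro x y
      rw [Finset.prod_add, Finset.mul_sum]
      refine Finset.sum_congr rfl fun t _ => ?_
      rw [Finset.prod_boole, Finset.prod_const]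
      by_cases h : ∀ i ∈ t, x i = y i
      · rw [if_pos h, if_pos (fun i hi => (h i hi).symm)]
        ring
      · rw [if_neg h, if_neg (fun hc => h (fun i hi => (hc i hi).symm))]
        ring
    rw [Finset.sum_congr rfl fun x _ =>
      Finset.sum_congr rfl fun y _ => step3 x y]
    have step4 : ∀ x, ∑ y, ∑ t ∈ J.powerset, (q x * b ^ (J \ t).card)
        * (if ∀ i ∈ t, y i = x i then q y else 0)
        = ∑ t ∈ J.powerset, (q x * b ^ (J \ t).card)
            * ∑ y, (if ∀ i ∈ t, y i = x i then q y else 0) := by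
      intro x
      rw [Finset.sum_comm]
      exact Finset.sum_congr rfl fun t _ => by rw [Finset.mul_sum]
    rw [Finset.sum_congr rfl fun x _ => step4 x]
    have step5 : ∑ x, ∑ t ∈ J.powerset, (q x * b ^ (J \ t).card)
        * ∑ y, (if ∀ i ∈ t, y i = x i then q y else 0)
        ≤ ∑ x, ∑ t ∈ J.powerset, (q x * b ^ (J \ t).card) * a ^ t.card := by
      refine Finset.sum_le_sum fun x _ => Finset.sum_le_sum fun t ht => ?_
      have hd := hdense t (Finset.mem_powerset.mp ht) x
      rw [hapow t (Finset.mem_powerset.mp ht)] at hd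
      exact mul_le_mul_of_nonneg_left hd
        (mul_nonneg (hq0 x) (pow_nonneg hb.le _))
    refine le_trans step5 ?_
    have step6 : ∑ x, ∑ t ∈ J.powerset, (q x * b ^ (J \ t).card) * a ^ t.card
        = (∑ x, q x) * ∑ t ∈ J.powerset, a ^ t.card * b ^ (J \ t).card := by
      rw [Finset.sum_mul]
      refine Finset.sum_congr rfl fun x _ => ?_
      rw [Finset.mul_sum]
      exact Finset.sum_congr rfl fun t _ => by ring
    rw [step6, hq1, one_mul]
    have step7 : ∑ t ∈ J.powerset, a ^ t.card * b ^ (J \ t).card = (a+b)^J.card := by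
      rw [← Finset.prod_const]
      rw [Finset.prod_add (fun _ => a) (fun _ => b) J]
      exact Finset.sum_congr rfl fun t _ => by rw [Finset.prod_const, Finset.prod_const]
    rw [step7]
  have havgT : (CH^n)⁻¹ * ∑ g, T g ≤ 2*n*ε := by
    have hcardg : ((Fintype.card (Fin n → H) : ℝ)) = CH^n := by
      rw [Fintype.card_fun, Fintype.card_fin, hCHdef]
      push_cast
      ring
    have hsumT : ∑ g : Fin n → H, T g = M * (∑ g : Fin n → H, Col g) - CH^n := by
      simp only [hTdef]
      rw [Finset.sum_sub_distrib, ← Finset.mul_sum, Finset.sum_const, Finset.card_univ,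
        nsmul_eq_mul, mul_one, hcardg]
    have hM1 : M * ((CH^n)⁻¹ * ∑ g : Fin n → H, Col g) ≤ M * (a+b)^J.card :=
      mul_le_mul_of_nonneg_left key hM.le
    have hMab : M * (a+b)^J.card = (1+ε)^J.card := by
      have h2b : (2:ℝ)^lam' = b⁻¹ := by rw [hbinv, inv_inv]
      rw [hMdef, h2b, ← mul_pow]
      congr 1
      rw [hab]
      field_simp
      ring
    have hJn : J.card ≤ n := le_trans (Finset.card_le_univ J) (by simp)
    have hpow1 : (1+ε)^J.card ≤ (1+ε)^n :=
      pow_le_pow_right₀ (by linarith) hJn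
    have hpow2 : (1+ε)^n ≤ 1 + 2*n*ε := one_add_pow_le hε n hne
    have heq : (CH^n)⁻¹ * ∑ g, T g = M * ((CH^n)⁻¹ * ∑ g : Fin n → H, Col g) - 1 := by
      rw [hsumT]
      field_simp
    rw [heq]
    calc M * ((CH^n)⁻¹ * ∑ g : Fin n → H, Col g) - 1
        ≤ (1+ε)^J.card - 1 := by rw [← hMab]; linarith
      _ ≤ (1+ε)^n - 1 := by linarith
      _ ≤ 2*n*ε := by linarith
  -- assemble
  suffices hfin : (CH^n)⁻¹ * ∑ g : Fin n → H, (1/2) * ∑ u : Fin n → (Fin lam' → Bool),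
      |P g u - (if ∀ j ∉ J, u j = ev (g j) (w j) then M⁻¹ else 0)|
    ≤ Real.sqrt ((n:ℝ) * ε) by
    simpa only [hPdef] using hfin
  have hsplit : (CH^n)⁻¹ * ∑ g : Fin n → H, (1/2) * ∑ u : Fin n → (Fin lam' → Bool),
      |P g u - (if ∀ j ∉ J, u j = ev (g j) (w j) then M⁻¹ else 0)|
      = (1/2) * ∑ g : Fin n → H, (CH^n)⁻¹ * ∑ u : Fin n → (Fin lam' → Bool),
        |P g u - (if ∀ j ∉ J, u j = ev (g j) (w j) then M⁻¹ else 0)| := by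
    rw [Finset.mul_sum, Finset.mul_sum]
    exact Finset.sum_congr rfl fun g _ => by ring
  rw [hsplit]
  have hcardg : ((Fintype.card (Fin n → H) : ℝ)) = CH^n := by
    rw [Fintype.card_fun, Fintype.card_fin, hCHdef]
    push_cast
    ring
  have h1 : ∑ g : Fin n → H, (CH^n)⁻¹ * ∑ u : Fin n → (Fin lam' → Bool),
      |P g u - (if ∀ j ∉ J, u j = ev (g j) (w j) then M⁻¹ else 0)|
      ≤ ∑ g : Fin n → H, (CH^n)⁻¹ * Real.sqrt (T g) :=
    Finset.sum_le_sum fun g _ => mul_le_mul_of_nonneg_left (hDle g) (by positivity)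
  have h2 : ∑ g : Fin n → H, (CH^n)⁻¹ * Real.sqrt (T g)
      ≤ Real.sqrt (∑ g : Fin n → H, (CH^n)⁻¹ * T g) := by
    refine avg_sqrt_le _ _ (fun g => by positivity) hTnn ?_
    rw [Finset.sum_const, Finset.card_univ, nsmul_eq_mul, hcardg]
    field_simp
  have h3 : ∑ g : Fin n → H, (CH^n)⁻¹ * T g = (CH^n)⁻¹ * ∑ g : Fin n → H, T g :=
    (Finset.mul_sum _ _ _).symm
  have h4 : Real.sqrt (∑ g : Fin n → H, (CH^n)⁻¹ * T g) ≤ Real.sqrt (2*n*ε) := by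
    rw [h3]
    exact Real.sqrt_le_sqrt havgT
  have hnε : (0:ℝ) ≤ (n:ℝ) * ε := by positivity
  have h5 : (1/2) * Real.sqrt (2*(n:ℝ)*ε) ≤ Real.sqrt ((n:ℝ)*ε) := by
    rw [show (2*(n:ℝ)*ε) = (2:ℝ)^2 * ((n*ε)/2) by ring,
      Real.sqrt_mul (by positivity) (((n:ℝ)*ε)/2), Real.sqrt_sq (by norm_num : (0:ℝ) ≤ 2)]
    rw [show (1/2 : ℝ) * (2 * Real.sqrt ((n:ℝ)*ε/2)) = Real.sqrt ((n:ℝ)*ε/2) by ring]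
    exact Real.sqrt_le_sqrt (by linarith)
  calc (1/2) * ∑ g : Fin n → H, (CH^n)⁻¹ * ∑ u : Fin n → (Fin lam' → Bool),
        |P g u - (if ∀ j ∉ J, u j = ev (g j) (w j) then M⁻¹ else 0)|
      ≤ (1/2) * Real.sqrt (2*(n:ℝ)*ε) := by
        have := le_trans h1 (le_trans h2 h4)
        nlinarith [this]
    _ ≤ Real.sqrt ((n:ℝ)*ε) := h5


/-- Key leakage lemma: with `X` uniform over `({0,1}^λ)^n`, leakage `Z = F(X)` of `s`
bits, hash functions `G` uniform over a universal family `𝒢^n` with range `{0,1}^λ'`,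
parameters `δ, γ > 0`, `s' > s`, `(1-δ)λ > λ' + log₂ n + 1`,
`k = (s' + log₂(1/γ))/(δλ)`, and assuming the dense-decomposition lemma as a hypothesis
(every conditioned source `X_z` with deficiency at most `s'` is `γ`-close to a convex
combination of `(k, 1-δ)`-dense sources), there exists a family `V_{G,Z}` of convex
combinations of `k`-bit-fixing `(n, 2^λ')`-sources with
`Δ[(G, Z, G(X)), (G, Z, V_{G,Z})] ≤ √(2^{-(1-δ)λ + λ' + log₂ n}) + γ + 2^{s-s'}`. -/
theorem stmt_19 {n lam lam' s s' : ℕ} {H : Type*} [Fintype H] [Nonempty H]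
    (δ γ k : ℝ) (hδ : 0 < δ) (hγ : 0 < γ) (hss : s < s')
    (hk : k = ((s' : ℝ) + Real.logb 2 (1 / γ)) / (δ * lam))
    (ev : H → (Fin lam → Bool) → (Fin lam' → Bool))
    (huniv : ∀ x y : Fin lam → Bool, x ≠ y →
      ((Finset.univ.filter (fun g : H => ev g x = ev g y)).card : ℝ)
        ≤ (Fintype.card H : ℝ) * (2 : ℝ) ^ (-(lam' : ℝ)))
    (F : (Fin n → (Fin lam → Bool)) → (Fin s → Bool))
    (Pz : (Fin s → Bool) → ℝ)
    (hPz : ∀ z, Pz z = ∑ x, if F x = z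
      then ((Fintype.card (Fin n → Fin lam → Bool) : ℝ))⁻¹ else 0)
    (Xz : (Fin s → Bool) → (Fin n → (Fin lam → Bool)) → ℝ)
    (hXz : ∀ z x, Xz z x =
      (if F x = z then ((Fintype.card (Fin n → Fin lam → Bool) : ℝ))⁻¹ else 0) / Pz z)
    (hcond : (1 - δ) * lam > lam' + Real.logb 2 n + 1)
    (hdecomp : ∀ z : Fin s → Bool, 0 < Pz z →
      (∀ x, Xz z x ≤ (2 : ℝ) ^ ((s' : ℝ) - ((n * lam : ℕ) : ℝ))) →
      ∃ W : (Fin n → (Fin lam → Bool)) → ℝ, IsConvexCombKDense k δ W ∧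
        (1 / 2) * (∑ x, |Xz z x - W x|) ≤ γ) :
    ∃ V : (Fin n → H) → (Fin s → Bool) → (Fin n → (Fin lam' → Bool)) → ℝ,
      (∀ g z, IsConvexCombBitFixing k (V g z)) ∧
      (1 / 2) * ∑ g : Fin n → H, ∑ z : Fin s → Bool, ∑ u : Fin n → (Fin lam' → Bool),
          |((Fintype.card H : ℝ) ^ n)⁻¹ *
              (∑ x, if (F x = z ∧ ∀ i, ev (g i) (x i) = u i)
                then ((Fintype.card (Fin n → Fin lam → Bool) : ℝ))⁻¹ else 0)
            - ((Fintype.card H : ℝ) ^ n)⁻¹ * Pz z * V g z u|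
        ≤ Real.sqrt ((2 : ℝ) ^ (-(1 - δ) * lam + lam' + Real.logb 2 n)) + γ
          + (2 : ℝ) ^ ((s : ℝ) - (s' : ℝ)) := by
  classical
  have hN : (0:ℝ) < (Fintype.card (Fin n → Fin lam → Bool) : ℝ) := by
    exact_mod_cast Fintype.card_pos
  have hCH : (0:ℝ) < (Fintype.card H : ℝ) := by exact_mod_cast Fintype.card_pos
  have hCHn : (0:ℝ) < ((Fintype.card H : ℝ))^n := pow_pos hCH n
  have hcardg : ((Fintype.card (Fin n → H) : ℝ)) = ((Fintype.card H : ℝ))^n := by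
    rw [Fintype.card_fun, Fintype.card_fin]; push_cast; ring
  have hPz0 : ∀ z, 0 ≤ Pz z := by
    intro z; rw [hPz]
    exact Finset.sum_nonneg fun x _ => by positivity
  have hPzsum : ∑ z, Pz z = 1 := by
    rw [Finset.sum_congr rfl fun z _ => hPz z, Finset.sum_comm]
    have hrow : ∀ x : Fin n → Fin lam → Bool, ∑ z : Fin s → Bool,
        (if F x = z then ((Fintype.card (Fin n → Fin lam → Bool) : ℝ))⁻¹ else 0)
        = ((Fintype.card (Fin n → Fin lam → Bool) : ℝ))⁻¹ := by
      intro x; rw [Finset.sum_ite_eq]; simp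
    rw [Finset.sum_congr rfl fun x _ => hrow x, Finset.sum_const, Finset.card_univ,
      nsmul_eq_mul, mul_inv_cancel₀ hN.ne']
  have hNval : (Fintype.card (Fin n → Fin lam → Bool) : ℝ) = (2:ℝ)^(((n*lam : ℕ)):ℝ) := by
    rw [Fintype.card_fun, Fintype.card_fun, Fintype.card_fin, Fintype.card_fin,
      Fintype.card_bool]
    rw [Real.rpow_natCast]
    push_cast
    rw [← pow_mul, mul_comm]
  -- n * ε ≤ 1/2
  have hnε : (n:ℝ) * (2:ℝ)^((lam':ℝ) - (1-δ)*(lam:ℝ)) ≤ 1/2 := by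
    rcases Nat.eq_zero_or_pos n with hn0 | hn
    · rw [hn0]; norm_num
    · have hnpos : (0:ℝ) < n := by exact_mod_cast hn
      have h1 : (n:ℝ) = (2:ℝ)^(Real.logb 2 (n:ℝ)) :=
        (Real.rpow_logb two_pos (by norm_num) hnpos).symm
      rw [h1, ← Real.rpow_add two_pos]
      calc (2:ℝ)^(Real.logb 2 (n:ℝ) + ((lam':ℝ) - (1-δ)*(lam:ℝ)))
          ≤ (2:ℝ)^(-1 : ℝ) := by
            apply Real.rpow_le_rpow_of_exponent_le (by norm_num)
            linarith
        _ = 1/2 := by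
            rw [Real.rpow_neg_one]; norm_num
  -- bad z have small mass
  have hbadle : ∀ z : Fin s → Bool, 0 < Pz z →
      ¬(∀ x, Xz z x ≤ (2 : ℝ) ^ ((s' : ℝ) - ((n * lam : ℕ) : ℝ))) →
      Pz z ≤ (2:ℝ)^(-(s':ℝ)) := by
    intro z hp hnd
    push_neg at hnd
    obtain ⟨x, hx⟩ := hnd
    have hB : (0:ℝ) < (2 : ℝ) ^ ((s' : ℝ) - ((n * lam : ℕ) : ℝ)) :=
      Real.rpow_pos_of_pos two_pos _
    rw [hXz] at hx
    by_cases hFx : F x = z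
    · rw [if_pos hFx] at hx
      have h2 : (2 : ℝ) ^ ((s' : ℝ) - ((n * lam : ℕ) : ℝ)) * Pz z
          < (Fintype.card (Fin n → Fin lam → Bool) : ℝ)⁻¹ := by
        rw [lt_div_iff₀ hp] at hx
        linarith
      have h3 : Pz z < (Fintype.card (Fin n → Fin lam → Bool) : ℝ)⁻¹
          * ((2 : ℝ) ^ ((s' : ℝ) - ((n * lam : ℕ) : ℝ)))⁻¹ := by
        rw [lt_mul_inv_iff₀ hB]
        calc Pz z * (2 : ℝ) ^ ((s' : ℝ) - ((n * lam : ℕ) : ℝ))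
            = (2 : ℝ) ^ ((s' : ℝ) - ((n * lam : ℕ) : ℝ)) * Pz z := by ring
          _ < _ := h2
      refine le_of_lt (lt_of_lt_of_le h3 (le_of_eq ?_))
      rw [hNval, ← Real.rpow_neg (by norm_num), ← Real.rpow_neg (by norm_num),
        ← Real.rpow_add two_pos]
      congr 1
      ring
    · rw [if_neg hFx] at hx
      rw [zero_div] at hx
      exact absurd hx (not_lt.mpr hB.le)
  have h2ss' : (2:ℝ)^((s:ℝ)-(s':ℝ)) ≤ 1/2 := by
    calc (2:ℝ)^((s:ℝ)-(s':ℝ)) ≤ (2:ℝ)^(-1:ℝ) := by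
          apply Real.rpow_le_rpow_of_exponent_le (by norm_num)
          have : (s:ℝ) + 1 ≤ (s':ℝ) := by exact_mod_cast hss
          linarith
      _ = 1/2 := by rw [Real.rpow_neg_one]; norm_num
  have hcards : ((Fintype.card (Fin s → Bool) : ℝ)) = (2:ℝ)^((s:ℝ)) := by
    rw [Fintype.card_fun, Fintype.card_fin, Fintype.card_bool, Real.rpow_natCast]
    push_cast; ring
  -- existence of a good z
  have hgood_ex : ∃ z : Fin s → Bool, 0 < Pz z ∧
      ∀ x, Xz z x ≤ (2 : ℝ) ^ ((s' : ℝ) - ((n * lam : ℕ) : ℝ)) := by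
    by_contra hno
    push_neg at hno
    have hall : ∀ z : Fin s → Bool, Pz z ≤ (2:ℝ)^(-(s':ℝ)) := by
      intro z
      rcases eq_or_lt_of_le (hPz0 z) with h0 | hp
      · rw [← h0]; positivity
      · obtain ⟨x, hx⟩ := hno z hp
        exact hbadle z hp (by push_neg; exact ⟨x, hx⟩)
    have : (1:ℝ) ≤ (2:ℝ)^((s:ℝ)) * (2:ℝ)^(-(s':ℝ)) := by
      calc (1:ℝ) = ∑ z, Pz z := hPzsum.symm
        _ ≤ ∑ _z : Fin s → Bool, (2:ℝ)^(-(s':ℝ)) :=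
            Finset.sum_le_sum fun z _ => hall z
        _ = (2:ℝ)^((s:ℝ)) * (2:ℝ)^(-(s':ℝ)) := by
            rw [Finset.sum_const, Finset.card_univ, nsmul_eq_mul, hcards]
    rw [← Real.rpow_add two_pos] at this
    have h12 : (2:ℝ)^((s:ℝ) + -(s':ℝ)) ≤ 1/2 := by
      calc (2:ℝ)^((s:ℝ)+-(s':ℝ)) ≤ (2:ℝ)^(-1:ℝ) := by
            apply Real.rpow_le_rpow_of_exponent_le (by norm_num)
            have : (s:ℝ) + 1 ≤ (s':ℝ) := by exact_mod_cast hss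
            linarith
        _ = 1/2 := by rw [Real.rpow_neg_one]; norm_num
    linarith
  obtain ⟨z₀, hz₀p, hz₀d⟩ := hgood_ex
  have hW' : ∀ z : Fin s → Bool, ∃ W : (Fin n → (Fin lam → Bool)) → ℝ,
      IsConvexCombKDense k δ W ∧
      ((0 < Pz z ∧ ∀ x, Xz z x ≤ (2 : ℝ) ^ ((s' : ℝ) - ((n * lam : ℕ) : ℝ))) →
        (1/2)*(∑ x, |Xz z x - W x|) ≤ γ) := by
    intro z
    by_cases h : 0 < Pz z ∧ ∀ x, Xz z x ≤ (2 : ℝ) ^ ((s' : ℝ) - ((n * lam : ℕ) : ℝ))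
    · obtain ⟨W, h1, h2⟩ := hdecomp z h.1 h.2
      exact ⟨W, h1, fun _ => h2⟩
    · obtain ⟨W, h1, h2⟩ := hdecomp z₀ hz₀p hz₀d
      exact ⟨W, h1, fun hc => absurd hc h⟩
  choose W hWconv hWγ using hW'
  have hWconv' : ∀ z : Fin s → Bool, ∃ (m : ℕ) (wt : Fin m → ℝ)
      (q : Fin m → (Fin n → (Fin lam → Bool)) → ℝ),
      (∀ i, 0 ≤ wt i) ∧ (∑ i, wt i = 1) ∧
      (∀ i, (∀ x, 0 ≤ q i x) ∧ (∑ x, q i x = 1) ∧ IsKDense k δ (q i)) ∧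
      ∀ x, W z x = ∑ i, wt i * q i x := fun z => hWconv z
  choose m wt qq hwt0 hwt1 hqprops hWeq using hWconv'
  have hq0 : ∀ z i, ∀ x, 0 ≤ qq z i x := fun z i => (hqprops z i).1
  have hq1 : ∀ z i, ∑ x, qq z i x = 1 := fun z i => (hqprops z i).2.1
  have hkd : ∀ z i, ∃ Jzi : Finset (Fin n), ((n : ℝ) - Jzi.card ≤ k) ∧
      (∃ w : Fin n → (Fin lam → Bool), ∀ x, qq z i x ≠ 0 → ∀ j ∉ Jzi, x j = w j) ∧
      IsDenseOn δ Jzi (qq z i) := fun z i => (hqprops z i).2.2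
  choose J hJcard hJw hJdense using hkd
  choose wv hwv using hJw
  refine ⟨fun g z u => ∑ i, wt z i *
    (if ∀ j ∉ J z i, u j = ev (g j) (wv z i j)
      then (((2:ℝ)^lam')^(J z i).card)⁻¹ else 0), ?_, ?_⟩
  · intro g z
    exact ⟨m z, wt z, fun i u => if ∀ j ∉ J z i, u j = ev (g j) (wv z i j)
        then (((2:ℝ)^lam')^(J z i).card)⁻¹ else 0,
      hwt0 z, hwt1 z,
      fun i => ⟨J z i, hJcard z i, fun j => ev (g j) (wv z i j), fun u => rfl⟩,
      fun u => rfl⟩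
  · -- main bound
    have hind1 : ∀ (g : Fin n → H) (x : Fin n → Fin lam → Bool),
        ∑ u : Fin n → (Fin lam' → Bool),
          (if ∀ i, ev (g i) (x i) = u i then (1:ℝ) else 0) = 1 := by
      intro g x
      have h1 : ∀ u : Fin n → (Fin lam' → Bool),
          (if ∀ i, ev (g i) (x i) = u i then (1:ℝ) else 0)
            = (if (fun i => ev (g i) (x i)) = u then (1:ℝ) else 0) := by
        intro u
        by_cases h : (fun i => ev (g i) (x i)) = u
        · rw [if_pos (fun i => congrFun h i), if_pos h]
        · rw [if_neg (fun hh => h (funext hh)), if_neg h]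
      rw [Finset.sum_congr rfl fun u _ => h1 u, Finset.sum_ite_eq]
      simp
    set SQ : ℝ := Real.sqrt ((n:ℝ) * (2:ℝ)^((lam':ℝ) - (1-δ)*(lam:ℝ))) with hSQdef
    have hSQ0 : 0 ≤ SQ := Real.sqrt_nonneg _
    -- abbreviation facts about bf sums
    have hbfsum : ∀ (z : Fin s → Bool) (i : Fin (m z)) (g : Fin n → H),
        ∑ u : Fin n → (Fin lam' → Bool),
          (if ∀ j ∉ J z i, u j = ev (g j) (wv z i j)
            then (((2:ℝ)^lam')^(J z i).card)⁻¹ else 0) = 1 := by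
      intro z i g
      have h1 : ∀ u : Fin n → (Fin lam' → Bool),
          (if ∀ j ∉ J z i, u j = ev (g j) (wv z i j)
            then (((2:ℝ)^lam')^(J z i).card)⁻¹ else 0)
          = (((2:ℝ)^lam')^(J z i).card)⁻¹
              * (if ∀ j ∉ J z i, u j = ev (g j) (wv z i j) then (1:ℝ) else 0) := by
        intro u
        by_cases h : ∀ j ∉ J z i, u j = ev (g j) (wv z i j) <;> simp [h]
      rw [Finset.sum_congr rfl fun u _ => h1 u, ← Finset.mul_sum,
        slice_sum (J z i) (fun j => ev (g j) (wv z i j))]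
      rw [inv_mul_cancel₀]
      positivity
    have hVnn : ∀ (g : Fin n → H) (z : Fin s → Bool) (u : Fin n → Fin lam' → Bool),
        0 ≤ ∑ i, wt z i * (if ∀ j ∉ J z i, u j = ev (g j) (wv z i j)
            then (((2:ℝ)^lam')^(J z i).card)⁻¹ else 0) := by
      intro g z u
      refine Finset.sum_nonneg fun i _ => mul_nonneg (hwt0 z i) ?_
      by_cases h : ∀ j ∉ J z i, u j = ev (g j) (wv z i j)
      · rw [if_pos h]; positivity
      · rw [if_neg h]
    have hVsum : ∀ (g : Fin n → H) (z : Fin s → Bool),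
        ∑ u : Fin n → Fin lam' → Bool, ∑ i, wt z i *
          (if ∀ j ∉ J z i, u j = ev (g j) (wv z i j)
            then (((2:ℝ)^lam')^(J z i).card)⁻¹ else 0) = 1 := by
      intro g z
      rw [Finset.sum_comm]
      calc ∑ i, ∑ u : Fin n → Fin lam' → Bool, wt z i *
            (if ∀ j ∉ J z i, u j = ev (g j) (wv z i j)
              then (((2:ℝ)^lam')^(J z i).card)⁻¹ else 0)
          = ∑ i, wt z i * ∑ u : Fin n → Fin lam' → Bool,
              (if ∀ j ∉ J z i, u j = ev (g j) (wv z i j)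
                then (((2:ℝ)^lam')^(J z i).card)⁻¹ else 0) :=
            Finset.sum_congr rfl fun i _ => (Finset.mul_sum _ _ _).symm
        _ = ∑ i, wt z i * 1 :=
            Finset.sum_congr rfl fun i _ => by rw [hbfsum z i g]
        _ = ∑ i, wt z i := Finset.sum_congr rfl fun i _ => mul_one _
        _ = 1 := hwt1 z
    have hAnn : ∀ (g : Fin n → H) (z : Fin s → Bool) (u : Fin n → Fin lam' → Bool),
        0 ≤ ∑ x, (if (F x = z ∧ ∀ i, ev (g i) (x i) = u i)
          then ((Fintype.card (Fin n → Fin lam → Bool) : ℝ))⁻¹ else 0) := by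
      intro g z u
      refine Finset.sum_nonneg fun x _ => ?_
      by_cases h : (F x = z ∧ ∀ i, ev (g i) (x i) = u i)
      · rw [if_pos h]; positivity
      · rw [if_neg h]
    have hAsum : ∀ (g : Fin n → H) (z : Fin s → Bool),
        ∑ u : Fin n → Fin lam' → Bool, ∑ x, (if (F x = z ∧ ∀ i, ev (g i) (x i) = u i)
          then ((Fintype.card (Fin n → Fin lam → Bool) : ℝ))⁻¹ else 0) = Pz z := by
      intro g z
      rw [Finset.sum_comm]
      have hx1 : ∀ x, ∑ u : Fin n → Fin lam' → Bool,
          (if (F x = z ∧ ∀ i, ev (g i) (x i) = u i)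
            then ((Fintype.card (Fin n → Fin lam → Bool) : ℝ))⁻¹ else 0)
          = (if F x = z then ((Fintype.card (Fin n → Fin lam → Bool) : ℝ))⁻¹ else 0) := by
        intro x
        by_cases hf : F x = z
        · rw [if_pos hf]
          have h2 : ∀ u : Fin n → Fin lam' → Bool,
              (if (F x = z ∧ ∀ i, ev (g i) (x i) = u i)
                then ((Fintype.card (Fin n → Fin lam → Bool) : ℝ))⁻¹ else 0)
              = ((Fintype.card (Fin n → Fin lam → Bool) : ℝ))⁻¹
                  * (if ∀ i, ev (g i) (x i) = u i then (1:ℝ) else 0) := by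
            intro u
            by_cases h : ∀ i, ev (g i) (x i) = u i
            · rw [if_pos ⟨hf, h⟩, if_pos h, mul_one]
            · rw [if_neg (fun hc => h hc.2), if_neg h, mul_zero]
          rw [Finset.sum_congr rfl fun u _ => h2 u, ← Finset.mul_sum, hind1 g x, mul_one]
        · rw [if_neg hf]
          refine Finset.sum_eq_zero fun u _ => ?_
          rw [if_neg (fun hc => hf hc.1)]
      rw [Finset.sum_congr rfl fun x _ => hx1 x, ← hPz]
    -- the per-z key bound
    have hkey : ∀ z : Fin s → Bool,
        (((Fintype.card H : ℝ))^n)⁻¹ * ∑ g : Fin n → H, (1/2) *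
          ∑ u : Fin n → Fin lam' → Bool,
            |(∑ x, (if (F x = z ∧ ∀ i, ev (g i) (x i) = u i)
                then ((Fintype.card (Fin n → Fin lam → Bool) : ℝ))⁻¹ else 0))
              - Pz z * ∑ i, wt z i * (if ∀ j ∉ J z i, u j = ev (g j) (wv z i j)
                  then (((2:ℝ)^lam')^(J z i).card)⁻¹ else 0)|
          ≤ Pz z * (γ + SQ) + (if (0 < Pz z ∧
              ¬∀ x, Xz z x ≤ (2 : ℝ) ^ ((s' : ℝ) - ((n * lam : ℕ) : ℝ)))
            then Pz z else 0) := by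
      intro z
      by_cases hp : 0 < Pz z
      · by_cases hd : ∀ x, Xz z x ≤ (2 : ℝ) ^ ((s' : ℝ) - ((n * lam : ℕ) : ℝ))
        · -- GOOD z
          rw [if_neg (fun hc => hc.2 hd), add_zero]
          have hPzne : Pz z ≠ 0 := ne_of_gt hp
          have hAeq : ∀ (g : Fin n → H) (u : Fin n → Fin lam' → Bool),
              (∑ x, (if (F x = z ∧ ∀ i, ev (g i) (x i) = u i)
                then ((Fintype.card (Fin n → Fin lam → Bool) : ℝ))⁻¹ else 0))
              = Pz z * ∑ x, Xz z x *
                  (if ∀ i, ev (g i) (x i) = u i then (1:ℝ) else 0) := by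
            intro g u
            rw [Finset.mul_sum]
            refine Finset.sum_congr rfl fun x _ => ?_
            rw [hXz z x]
            by_cases hf : F x = z
            · by_cases hi : ∀ i, ev (g i) (x i) = u i
              · rw [if_pos ⟨hf, hi⟩, if_pos hf, if_pos hi, mul_one]
                field_simp
              · rw [if_neg (fun hc => hi hc.2), if_neg hi, mul_zero, mul_zero]
            · rw [if_neg (fun hc => hf hc.1), if_neg hf, zero_div, zero_mul, mul_zero]
          suffices hin : ((Fintype.card H : ℝ)^n)⁻¹ * ∑ g : Fin n → H, (1/2) *
              ∑ u : Fin n → Fin lam' → Bool,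
                |(∑ x, Xz z x * (if ∀ i, ev (g i) (x i) = u i then (1:ℝ) else 0))
                  - ∑ i, wt z i * (if ∀ j ∉ J z i, u j = ev (g j) (wv z i j)
                      then (((2:ℝ)^lam')^(J z i).card)⁻¹ else 0)|
              ≤ γ + SQ by
            have heq : ∀ g : Fin n → H, (1/2) * ∑ u : Fin n → Fin lam' → Bool,
                |(∑ x, (if (F x = z ∧ ∀ i, ev (g i) (x i) = u i)
                    then ((Fintype.card (Fin n → Fin lam → Bool) : ℝ))⁻¹ else 0))
                  - Pz z * ∑ i, wt z i * (if ∀ j ∉ J z i, u j = ev (g j) (wv z i j)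
                      then (((2:ℝ)^lam')^(J z i).card)⁻¹ else 0)|
                = Pz z * ((1/2) * ∑ u : Fin n → Fin lam' → Bool,
                    |(∑ x, Xz z x * (if ∀ i, ev (g i) (x i) = u i then (1:ℝ) else 0))
                      - ∑ i, wt z i * (if ∀ j ∉ J z i, u j = ev (g j) (wv z i j)
                          then (((2:ℝ)^lam')^(J z i).card)⁻¹ else 0)|) := by
              intro g
              have hu : ∀ u : Fin n → Fin lam' → Bool, |(∑ x, (if (F x = z ∧ ∀ i, ev (g i) (x i) = u i) then ((Fintype.card (Fin n → Fin lam → Bool) : ℝ))⁻¹ else 0)) - Pz z * (∑ i, wt z i * (if ∀ j ∉ J z i, u j = ev (g j) (wv z i j) then (((2:ℝ)^lam')^(J z i).card)⁻¹ else 0))|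
                  = Pz z * |(∑ x, Xz z x * (if ∀ i, ev (g i) (x i) = u i then (1:ℝ) else 0)) - (∑ i, wt z i * (if ∀ j ∉ J z i, u j = ev (g j) (wv z i j) then (((2:ℝ)^lam')^(J z i).card)⁻¹ else 0))| := by
                intro u
                rw [hAeq g u, ← mul_sub, abs_mul, abs_of_nonneg (hPz0 z)]
              rw [Finset.sum_congr rfl fun u _ => hu u, ← Finset.mul_sum]
              ring
            rw [Finset.sum_congr rfl fun g _ => heq g, ← Finset.mul_sum]
            calc ((Fintype.card H : ℝ)^n)⁻¹ * (Pz z * ∑ g : Fin n → H, (1/2) *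
                  ∑ u : Fin n → Fin lam' → Bool,
                    |(∑ x, Xz z x * (if ∀ i, ev (g i) (x i) = u i then (1:ℝ) else 0))
                      - ∑ i, wt z i * (if ∀ j ∉ J z i, u j = ev (g j) (wv z i j)
                          then (((2:ℝ)^lam')^(J z i).card)⁻¹ else 0)|)
                = Pz z * (((Fintype.card H : ℝ)^n)⁻¹ * ∑ g : Fin n → H, (1/2) *
                  ∑ u : Fin n → Fin lam' → Bool,
                    |(∑ x, Xz z x * (if ∀ i, ev (g i) (x i) = u i then (1:ℝ) else 0))
                      - ∑ i, wt z i * (if ∀ j ∉ J z i, u j = ev (g j) (wv z i j)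
                          then (((2:ℝ)^lam')^(J z i).card)⁻¹ else 0)|) := by ring
              _ ≤ Pz z * (γ + SQ) := mul_le_mul_of_nonneg_left hin (hPz0 z)
          -- now prove hin via triangle inequality
          have htri : ∀ (g : Fin n → H) (u : Fin n → Fin lam' → Bool),
              |(∑ x, Xz z x * (if ∀ i, ev (g i) (x i) = u i then (1:ℝ) else 0)) - (∑ i, wt z i * (if ∀ j ∉ J z i, u j = ev (g j) (wv z i j) then (((2:ℝ)^lam')^(J z i).card)⁻¹ else 0))| ≤ |(∑ x, Xz z x * (if ∀ i, ev (g i) (x i) = u i then (1:ℝ) else 0)) - (∑ x, W z x * (if ∀ i, ev (g i) (x i) = u i then (1:ℝ) else 0))| + |(∑ x, W z x * (if ∀ i, ev (g i) (x i) = u i then (1:ℝ) else 0)) - (∑ i, wt z i * (if ∀ j ∉ J z i, u j = ev (g j) (wv z i j) then (((2:ℝ)^lam')^(J z i).card)⁻¹ else 0))| :=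
            fun g u => abs_sub_le _ _ _
          have hWd := hWγ z ⟨hp, hd⟩
          have hdp : ∀ g : Fin n → H, ∑ u : Fin n → Fin lam' → Bool, |(∑ x, Xz z x * (if ∀ i, ev (g i) (x i) = u i then (1:ℝ) else 0)) - (∑ x, W z x * (if ∀ i, ev (g i) (x i) = u i then (1:ℝ) else 0))| ≤ ∑ x, |Xz z x - W z x| := by
            intro g
            have h1 : ∀ u : Fin n → Fin lam' → Bool, (∑ x, Xz z x * (if ∀ i, ev (g i) (x i) = u i then (1:ℝ) else 0)) - (∑ x, W z x * (if ∀ i, ev (g i) (x i) = u i then (1:ℝ) else 0))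
                = ∑ x, (Xz z x - W z x) * (if ∀ i, ev (g i) (x i) = u i then (1:ℝ) else 0) := by
              intro u
              rw [← Finset.sum_sub_distrib]
              exact Finset.sum_congr rfl fun x _ => (sub_mul _ _ _).symm
            calc ∑ u : Fin n → Fin lam' → Bool, |(∑ x, Xz z x * (if ∀ i, ev (g i) (x i) = u i then (1:ℝ) else 0)) - (∑ x, W z x * (if ∀ i, ev (g i) (x i) = u i then (1:ℝ) else 0))|
                = ∑ u : Fin n → Fin lam' → Bool, |∑ x, (Xz z x - W z x) * (if ∀ i, ev (g i) (x i) = u i then (1:ℝ) else 0)| :=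
                  Finset.sum_congr rfl fun u _ => by rw [h1 u]
              _ ≤ ∑ u : Fin n → Fin lam' → Bool, ∑ x, |(Xz z x - W z x) * (if ∀ i, ev (g i) (x i) = u i then (1:ℝ) else 0)| :=
                  Finset.sum_le_sum fun u _ => Finset.abs_sum_le_sum_abs _ _
              _ = ∑ x, ∑ u : Fin n → Fin lam' → Bool, |Xz z x - W z x| * (if ∀ i, ev (g i) (x i) = u i then (1:ℝ) else 0) := by
                  rw [Finset.sum_comm]
                  refine Finset.sum_congr rfl fun x _ => Finset.sum_congr rfl fun u _ => ?_
                  rw [abs_mul]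
                  congr 1
                  by_cases h : ∀ i, ev (g i) (x i) = u i <;> simp [h]
              _ = ∑ x, |Xz z x - W z x| := by
                  refine Finset.sum_congr rfl fun x _ => ?_
                  rw [← Finset.mul_sum, hind1 g x, mul_one]
          have part1 : ((Fintype.card H : ℝ)^n)⁻¹ * ∑ g : Fin n → H, (1/2) * ∑ u : Fin n → Fin lam' → Bool, |(∑ x, Xz z x * (if ∀ i, ev (g i) (x i) = u i then (1:ℝ) else 0)) - (∑ x, W z x * (if ∀ i, ev (g i) (x i) = u i then (1:ℝ) else 0))| ≤ γ := by
            calc ((Fintype.card H : ℝ)^n)⁻¹ * ∑ g : Fin n → H, (1/2) * ∑ u : Fin n → Fin lam' → Bool, |(∑ x, Xz z x * (if ∀ i, ev (g i) (x i) = u i then (1:ℝ) else 0)) - (∑ x, W z x * (if ∀ i, ev (g i) (x i) = u i then (1:ℝ) else 0))|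
                ≤ ((Fintype.card H : ℝ)^n)⁻¹ * ∑ _g : Fin n → H, γ := by
                  refine mul_le_mul_of_nonneg_left (Finset.sum_le_sum fun g _ => ?_) (by positivity)
                  calc (1/2) * ∑ u : Fin n → Fin lam' → Bool, |(∑ x, Xz z x * (if ∀ i, ev (g i) (x i) = u i then (1:ℝ) else 0)) - (∑ x, W z x * (if ∀ i, ev (g i) (x i) = u i then (1:ℝ) else 0))|
                      ≤ (1/2) * ∑ x, |Xz z x - W z x| := by
                        have := hdp g
                        linarith
                    _ ≤ γ := hWd
              _ = γ := by
                  rw [Finset.sum_const, Finset.card_univ, nsmul_eq_mul, hcardg,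
                    ← mul_assoc, inv_mul_cancel₀ (ne_of_gt hCHn), one_mul]
          have hPW : ∀ (g : Fin n → H) (u : Fin n → Fin lam' → Bool),
              (∑ x, W z x * (if ∀ i, ev (g i) (x i) = u i then (1:ℝ) else 0)) = ∑ i, wt z i * (∑ x, qq z i x * (if ∀ i, ev (g i) (x i) = u i then (1:ℝ) else 0)) := by
            intro g u
            calc (∑ x, W z x * (if ∀ i, ev (g i) (x i) = u i then (1:ℝ) else 0)) = ∑ x, (∑ i, wt z i * qq z i x) * (if ∀ i, ev (g i) (x i) = u i then (1:ℝ) else 0) :=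
                  Finset.sum_congr rfl fun x _ => by rw [hWeq z x]
              _ = ∑ x, ∑ i, wt z i * (qq z i x * (if ∀ i, ev (g i) (x i) = u i then (1:ℝ) else 0)) := by
                  refine Finset.sum_congr rfl fun x _ => ?_
                  rw [Finset.sum_mul]
                  exact Finset.sum_congr rfl fun i _ => by ring
              _ = ∑ i, ∑ x, wt z i * (qq z i x * (if ∀ i, ev (g i) (x i) = u i then (1:ℝ) else 0)) := Finset.sum_comm
              _ = ∑ i, wt z i * (∑ x, qq z i x * (if ∀ i, ev (g i) (x i) = u i then (1:ℝ) else 0)) :=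
                  Finset.sum_congr rfl fun i _ => by rw [← Finset.mul_sum]
          have h2 : ∀ (g : Fin n → H) (u : Fin n → Fin lam' → Bool),
              |(∑ x, W z x * (if ∀ i, ev (g i) (x i) = u i then (1:ℝ) else 0)) - (∑ i, wt z i * (if ∀ j ∉ J z i, u j = ev (g j) (wv z i j) then (((2:ℝ)^lam')^(J z i).card)⁻¹ else 0))| ≤ ∑ i, wt z i * |(∑ x, qq z i x * (if ∀ i, ev (g i) (x i) = u i then (1:ℝ) else 0)) - (if ∀ j ∉ J z i, u j = ev (g j) (wv z i j) then (((2:ℝ)^lam')^(J z i).card)⁻¹ else 0)| := by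
            intro g u
            rw [hPW g u]
            calc |(∑ i, wt z i * (∑ x, qq z i x * (if ∀ i, ev (g i) (x i) = u i then (1:ℝ) else 0))) - (∑ i, wt z i * (if ∀ j ∉ J z i, u j = ev (g j) (wv z i j) then (((2:ℝ)^lam')^(J z i).card)⁻¹ else 0))|
                = |∑ i, (wt z i * (∑ x, qq z i x * (if ∀ i, ev (g i) (x i) = u i then (1:ℝ) else 0)) - wt z i * (if ∀ j ∉ J z i, u j = ev (g j) (wv z i j) then (((2:ℝ)^lam')^(J z i).card)⁻¹ else 0))| := by
                  rw [← Finset.sum_sub_distrib]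
              _ ≤ ∑ i, |wt z i * (∑ x, qq z i x * (if ∀ i, ev (g i) (x i) = u i then (1:ℝ) else 0)) - wt z i * (if ∀ j ∉ J z i, u j = ev (g j) (wv z i j) then (((2:ℝ)^lam')^(J z i).card)⁻¹ else 0)| := Finset.abs_sum_le_sum_abs _ _
              _ = ∑ i, wt z i * |(∑ x, qq z i x * (if ∀ i, ev (g i) (x i) = u i then (1:ℝ) else 0)) - (if ∀ j ∉ J z i, u j = ev (g j) (wv z i j) then (((2:ℝ)^lam')^(J z i).card)⁻¹ else 0)| := by
                  refine Finset.sum_congr rfl fun i _ => ?_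
                  rw [← mul_sub, abs_mul, abs_of_nonneg (hwt0 z i)]
          have part2 : ((Fintype.card H : ℝ)^n)⁻¹ * ∑ g : Fin n → H, (1/2) * ∑ u : Fin n → Fin lam' → Bool, |(∑ x, W z x * (if ∀ i, ev (g i) (x i) = u i then (1:ℝ) else 0)) - (∑ i, wt z i * (if ∀ j ∉ J z i, u j = ev (g j) (wv z i j) then (((2:ℝ)^lam')^(J z i).card)⁻¹ else 0))| ≤ SQ := by
            have hswap : ((Fintype.card H : ℝ)^n)⁻¹ * ∑ g : Fin n → H, (1/2) * ∑ u : Fin n → Fin lam' → Bool, ∑ i, wt z i * |(∑ x, qq z i x * (if ∀ i, ev (g i) (x i) = u i then (1:ℝ) else 0)) - (if ∀ j ∉ J z i, u j = ev (g j) (wv z i j) then (((2:ℝ)^lam')^(J z i).card)⁻¹ else 0)|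
                = ∑ i, wt z i * (((Fintype.card H : ℝ)^n)⁻¹ * ∑ g : Fin n → H, (1/2) * ∑ u : Fin n → Fin lam' → Bool, |(∑ x, qq z i x * (if ∀ i, ev (g i) (x i) = u i then (1:ℝ) else 0)) - (if ∀ j ∉ J z i, u j = ev (g j) (wv z i j) then (((2:ℝ)^lam')^(J z i).card)⁻¹ else 0)|) := by
              have hg : ∀ g : Fin n → H, (1/2) * ∑ u : Fin n → Fin lam' → Bool, ∑ i, wt z i * |(∑ x, qq z i x * (if ∀ i, ev (g i) (x i) = u i then (1:ℝ) else 0)) - (if ∀ j ∉ J z i, u j = ev (g j) (wv z i j) then (((2:ℝ)^lam')^(J z i).card)⁻¹ else 0)|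
                  = ∑ i, wt z i * ((1/2) * ∑ u : Fin n → Fin lam' → Bool, |(∑ x, qq z i x * (if ∀ i, ev (g i) (x i) = u i then (1:ℝ) else 0)) - (if ∀ j ∉ J z i, u j = ev (g j) (wv z i j) then (((2:ℝ)^lam')^(J z i).card)⁻¹ else 0)|) := by
                intro g
                rw [Finset.sum_comm, Finset.mul_sum]
                refine Finset.sum_congr rfl fun i _ => ?_
                rw [← Finset.mul_sum]
                ring
              rw [Finset.sum_congr rfl fun g _ => hg g, Finset.sum_comm, Finset.mul_sum]
              refine Finset.sum_congr rfl fun i _ => ?_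
              rw [← Finset.mul_sum]
              ring
            calc ((Fintype.card H : ℝ)^n)⁻¹ * ∑ g : Fin n → H, (1/2) * ∑ u : Fin n → Fin lam' → Bool, |(∑ x, W z x * (if ∀ i, ev (g i) (x i) = u i then (1:ℝ) else 0)) - (∑ i, wt z i * (if ∀ j ∉ J z i, u j = ev (g j) (wv z i j) then (((2:ℝ)^lam')^(J z i).card)⁻¹ else 0))|
                ≤ ((Fintype.card H : ℝ)^n)⁻¹ * ∑ g : Fin n → H, (1/2) * ∑ u : Fin n → Fin lam' → Bool, ∑ i, wt z i * |(∑ x, qq z i x * (if ∀ i, ev (g i) (x i) = u i then (1:ℝ) else 0)) - (if ∀ j ∉ J z i, u j = ev (g j) (wv z i j) then (((2:ℝ)^lam')^(J z i).card)⁻¹ else 0)| := by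
                  refine mul_le_mul_of_nonneg_left (Finset.sum_le_sum fun g _ => ?_) (by positivity)
                  refine mul_le_mul_of_nonneg_left (Finset.sum_le_sum fun u _ => h2 g u) (by norm_num)
              _ = ∑ i, wt z i * (((Fintype.card H : ℝ)^n)⁻¹ * ∑ g : Fin n → H, (1/2) * ∑ u : Fin n → Fin lam' → Bool, |(∑ x, qq z i x * (if ∀ i, ev (g i) (x i) = u i then (1:ℝ) else 0)) - (if ∀ j ∉ J z i, u j = ev (g j) (wv z i j) then (((2:ℝ)^lam')^(J z i).card)⁻¹ else 0)|) := hswap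
              _ ≤ ∑ i, wt z i * SQ := by
                  refine Finset.sum_le_sum fun i _ => ?_
                  have hcorei := core δ ev huniv hnε (qq z i) (hq0 z i) (hq1 z i)
                    (J z i) (wv z i) (hwv z i) (hJdense z i)
                  rw [← hSQdef] at hcorei
                  exact mul_le_mul_of_nonneg_left hcorei (hwt0 z i)
              _ = SQ := by rw [← Finset.sum_mul, hwt1 z, one_mul]
          calc ((Fintype.card H : ℝ)^n)⁻¹ * ∑ g : Fin n → H, (1/2) * ∑ u : Fin n → Fin lam' → Bool, |(∑ x, Xz z x * (if ∀ i, ev (g i) (x i) = u i then (1:ℝ) else 0)) - (∑ i, wt z i * (if ∀ j ∉ J z i, u j = ev (g j) (wv z i j) then (((2:ℝ)^lam')^(J z i).card)⁻¹ else 0))|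
              ≤ ((Fintype.card H : ℝ)^n)⁻¹ * ∑ g : Fin n → H, (1/2) * ∑ u : Fin n → Fin lam' → Bool, (|(∑ x, Xz z x * (if ∀ i, ev (g i) (x i) = u i then (1:ℝ) else 0)) - (∑ x, W z x * (if ∀ i, ev (g i) (x i) = u i then (1:ℝ) else 0))| + |(∑ x, W z x * (if ∀ i, ev (g i) (x i) = u i then (1:ℝ) else 0)) - (∑ i, wt z i * (if ∀ j ∉ J z i, u j = ev (g j) (wv z i j) then (((2:ℝ)^lam')^(J z i).card)⁻¹ else 0))|) := by
                refine mul_le_mul_of_nonneg_left (Finset.sum_le_sum fun g _ => ?_) (by positivity)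
                refine mul_le_mul_of_nonneg_left (Finset.sum_le_sum fun u _ => htri g u) (by norm_num)
            _ = ((Fintype.card H : ℝ)^n)⁻¹ * ∑ g : Fin n → H, (1/2) * ∑ u : Fin n → Fin lam' → Bool, |(∑ x, Xz z x * (if ∀ i, ev (g i) (x i) = u i then (1:ℝ) else 0)) - (∑ x, W z x * (if ∀ i, ev (g i) (x i) = u i then (1:ℝ) else 0))|
                + ((Fintype.card H : ℝ)^n)⁻¹ * ∑ g : Fin n → H, (1/2) * ∑ u : Fin n → Fin lam' → Bool, |(∑ x, W z x * (if ∀ i, ev (g i) (x i) = u i then (1:ℝ) else 0)) - (∑ i, wt z i * (if ∀ j ∉ J z i, u j = ev (g j) (wv z i j) then (((2:ℝ)^lam')^(J z i).card)⁻¹ else 0))| := by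
                rw [← mul_add, ← Finset.sum_add_distrib]
                congr 1
                refine Finset.sum_congr rfl fun g _ => ?_
                rw [Finset.sum_add_distrib]
                ring
            _ ≤ γ + SQ := add_le_add part1 part2

        · -- BAD z
          rw [if_pos ⟨hp, hd⟩]
          have hperg : ∀ g : Fin n → H, (1/2) * ∑ u : Fin n → Fin lam' → Bool,
              |(∑ x, (if (F x = z ∧ ∀ i, ev (g i) (x i) = u i)
                  then ((Fintype.card (Fin n → Fin lam → Bool) : ℝ))⁻¹ else 0))
                - Pz z * ∑ i, wt z i * (if ∀ j ∉ J z i, u j = ev (g j) (wv z i j)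
                    then (((2:ℝ)^lam')^(J z i).card)⁻¹ else 0)|
              ≤ Pz z := by
            intro g
            have h1 : ∑ u : Fin n → Fin lam' → Bool,
                |(∑ x, (if (F x = z ∧ ∀ i, ev (g i) (x i) = u i)
                    then ((Fintype.card (Fin n → Fin lam → Bool) : ℝ))⁻¹ else 0))
                  - Pz z * ∑ i, wt z i * (if ∀ j ∉ J z i, u j = ev (g j) (wv z i j)
                      then (((2:ℝ)^lam')^(J z i).card)⁻¹ else 0)|
                ≤ ∑ u : Fin n → Fin lam' → Bool,
                  ((∑ x, (if (F x = z ∧ ∀ i, ev (g i) (x i) = u i)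
                      then ((Fintype.card (Fin n → Fin lam → Bool) : ℝ))⁻¹ else 0))
                    + Pz z * ∑ i, wt z i * (if ∀ j ∉ J z i, u j = ev (g j) (wv z i j)
                        then (((2:ℝ)^lam')^(J z i).card)⁻¹ else 0)) := by
              refine Finset.sum_le_sum fun u _ => ?_
              have ha := hAnn g z u
              have hv := hVnn g z u
              have hv' : 0 ≤ Pz z * ∑ i, wt z i *
                  (if ∀ j ∉ J z i, u j = ev (g j) (wv z i j)
                    then (((2:ℝ)^lam')^(J z i).card)⁻¹ else 0) :=
                mul_nonneg (hPz0 z) hv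
              rw [abs_le]
              constructor <;> linarith
            have h2 : ∑ u : Fin n → Fin lam' → Bool,
                ((∑ x, (if (F x = z ∧ ∀ i, ev (g i) (x i) = u i)
                    then ((Fintype.card (Fin n → Fin lam → Bool) : ℝ))⁻¹ else 0))
                  + Pz z * ∑ i, wt z i * (if ∀ j ∉ J z i, u j = ev (g j) (wv z i j)
                      then (((2:ℝ)^lam')^(J z i).card)⁻¹ else 0))
                = Pz z + Pz z := by
              rw [Finset.sum_add_distrib, hAsum g z, ← Finset.mul_sum, hVsum g z, mul_one]
            rw [h2] at h1
            linarith
          calc ((Fintype.card H : ℝ)^n)⁻¹ * ∑ g : Fin n → H, (1/2) *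
                ∑ u : Fin n → Fin lam' → Bool,
                  |(∑ x, (if (F x = z ∧ ∀ i, ev (g i) (x i) = u i)
                      then ((Fintype.card (Fin n → Fin lam → Bool) : ℝ))⁻¹ else 0))
                    - Pz z * ∑ i, wt z i * (if ∀ j ∉ J z i, u j = ev (g j) (wv z i j)
                        then (((2:ℝ)^lam')^(J z i).card)⁻¹ else 0)|
              ≤ ((Fintype.card H : ℝ)^n)⁻¹ * ∑ _g : Fin n → H, Pz z := by
                refine mul_le_mul_of_nonneg_left ?_ (by positivity)
                exact Finset.sum_le_sum fun g _ => hperg g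
            _ = Pz z := by
                rw [Finset.sum_const, Finset.card_univ, nsmul_eq_mul, hcardg]
                field_simp
            _ ≤ Pz z * (γ + SQ) + Pz z := by
                have : 0 ≤ Pz z * (γ + SQ) := mul_nonneg (hPz0 z) (by linarith)
                linarith
      · -- Pz z = 0
        have hp0 : Pz z = 0 := le_antisymm (not_lt.mp hp) (hPz0 z)
        rw [if_neg (fun hc => hp hc.1)]
        have hFne : ∀ x, F x ≠ z := by
          intro x hfx
          have h0 : ∑ x, (if F x = z
              then ((Fintype.card (Fin n → Fin lam → Bool) : ℝ))⁻¹ else 0) = 0 := by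
            rw [← hPz]; exact hp0
          have h1 := (Finset.sum_eq_zero_iff_of_nonneg (fun x _ => by
            by_cases h : F x = z
            · rw [if_pos h]; positivity
            · rw [if_neg h])).mp h0 x (Finset.mem_univ x)
          rw [if_pos hfx] at h1
          exact (inv_ne_zero hN.ne') h1
        have hA0 : ∀ (g : Fin n → H) (u : Fin n → Fin lam' → Bool),
            (∑ x, (if (F x = z ∧ ∀ i, ev (g i) (x i) = u i)
              then ((Fintype.card (Fin n → Fin lam → Bool) : ℝ))⁻¹ else 0)) = 0 :=
          fun g u => Finset.sum_eq_zero fun x _ => if_neg (fun hc => hFne x hc.1)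
        have hz : ∀ (g : Fin n → H), (1/2) * ∑ u : Fin n → Fin lam' → Bool,
            |(∑ x, (if (F x = z ∧ ∀ i, ev (g i) (x i) = u i)
                then ((Fintype.card (Fin n → Fin lam → Bool) : ℝ))⁻¹ else 0))
              - Pz z * ∑ i, wt z i * (if ∀ j ∉ J z i, u j = ev (g j) (wv z i j)
                  then (((2:ℝ)^lam')^(J z i).card)⁻¹ else 0)| = 0 := by
          intro g
          rw [mul_eq_zero]
          right
          refine Finset.sum_eq_zero fun u _ => ?_
          rw [hA0 g u, hp0, zero_mul, sub_zero, abs_zero]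
        rw [Finset.sum_congr rfl fun g _ => hz g, Finset.sum_const, hp0]
        simp

    -- final assembly
    have hbadsum : ∑ z : Fin s → Bool, (if (0 < Pz z ∧ ¬∀ x, Xz z x ≤ (2 : ℝ) ^ ((s' : ℝ) - ((n * lam : ℕ) : ℝ))) then Pz z else 0)
        ≤ (2:ℝ)^((s:ℝ)-(s':ℝ)) := by
      calc ∑ z : Fin s → Bool, (if (0 < Pz z ∧ ¬∀ x, Xz z x ≤ (2 : ℝ) ^ ((s' : ℝ) - ((n * lam : ℕ) : ℝ))) then Pz z else 0)
          ≤ ∑ _z : Fin s → Bool, (2:ℝ)^(-(s':ℝ)) := by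
            refine Finset.sum_le_sum fun z _ => ?_
            split_ifs with h
            · exact hbadle z h.1 h.2
            · positivity
        _ = (2:ℝ)^((s:ℝ)) * (2:ℝ)^(-(s':ℝ)) := by
            rw [Finset.sum_const, Finset.card_univ, nsmul_eq_mul, hcards]
        _ = (2:ℝ)^((s:ℝ)-(s':ℝ)) := by
            rw [← Real.rpow_add two_pos, sub_eq_add_neg]
    have hSQle : SQ ≤ Real.sqrt ((2 : ℝ) ^ (-(1 - δ) * (lam:ℝ) + (lam':ℝ) + Real.logb 2 (n:ℝ))) := by
      rcases Nat.eq_zero_or_pos n with hn0 | hn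
      · have h0 : SQ = 0 := by
          rw [hSQdef, hn0]
          norm_num
        rw [h0]
        exact Real.sqrt_nonneg _
      · have hnpos : (0:ℝ) < n := by exact_mod_cast hn
        have heq : (n:ℝ) * (2:ℝ)^((lam':ℝ) - (1-δ)*(lam:ℝ))
            = (2:ℝ)^(-(1 - δ) * (lam:ℝ) + (lam':ℝ) + Real.logb 2 (n:ℝ)) := by
          conv_lhs => rw [← Real.rpow_logb two_pos (by norm_num) hnpos]
          rw [← Real.rpow_add two_pos]
          congr 1
          ring
        rw [hSQdef, heq]
    show (1/2) * ∑ g : Fin n → H, ∑ z : Fin s → Bool, ∑ u : Fin n → Fin lam' → Bool, |((Fintype.card H : ℝ)^n)⁻¹ * (∑ x, (if (F x = z ∧ ∀ i, ev (g i) (x i) = u i) then ((Fintype.card (Fin n → Fin lam → Bool) : ℝ))⁻¹ else 0)) - ((Fintype.card H : ℝ)^n)⁻¹ * Pz z * (∑ i, wt z i * (if ∀ j ∉ J z i, u j = ev (g j) (wv z i j) then (((2:ℝ)^lam')^(J z i).card)⁻¹ else 0))|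
      ≤ Real.sqrt ((2 : ℝ) ^ (-(1 - δ) * (lam:ℝ) + (lam':ℝ) + Real.logb 2 (n:ℝ))) + γ
        + (2 : ℝ) ^ ((s : ℝ) - (s' : ℝ))
    calc (1/2) * ∑ g : Fin n → H, ∑ z : Fin s → Bool, ∑ u : Fin n → Fin lam' → Bool, |((Fintype.card H : ℝ)^n)⁻¹ * (∑ x, (if (F x = z ∧ ∀ i, ev (g i) (x i) = u i) then ((Fintype.card (Fin n → Fin lam → Bool) : ℝ))⁻¹ else 0)) - ((Fintype.card H : ℝ)^n)⁻¹ * Pz z * (∑ i, wt z i * (if ∀ j ∉ J z i, u j = ev (g j) (wv z i j) then (((2:ℝ)^lam')^(J z i).card)⁻¹ else 0))|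
        = (1/2) * ∑ g : Fin n → H, ∑ z : Fin s → Bool, ∑ u : Fin n → Fin lam' → Bool, ((Fintype.card H : ℝ)^n)⁻¹ * |(∑ x, (if (F x = z ∧ ∀ i, ev (g i) (x i) = u i) then ((Fintype.card (Fin n → Fin lam → Bool) : ℝ))⁻¹ else 0)) - Pz z * (∑ i, wt z i * (if ∀ j ∉ J z i, u j = ev (g j) (wv z i j) then (((2:ℝ)^lam')^(J z i).card)⁻¹ else 0))| := by
          refine congrArg _ (Finset.sum_congr rfl fun g _ => Finset.sum_congr rfl
            fun z _ => Finset.sum_congr rfl fun u _ => ?_)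
          rw [show ((Fintype.card H : ℝ)^n)⁻¹ * (∑ x, (if (F x = z ∧ ∀ i, ev (g i) (x i) = u i) then ((Fintype.card (Fin n → Fin lam → Bool) : ℝ))⁻¹ else 0)) - ((Fintype.card H : ℝ)^n)⁻¹ * Pz z * (∑ i, wt z i * (if ∀ j ∉ J z i, u j = ev (g j) (wv z i j) then (((2:ℝ)^lam')^(J z i).card)⁻¹ else 0))
              = ((Fintype.card H : ℝ)^n)⁻¹ * ((∑ x, (if (F x = z ∧ ∀ i, ev (g i) (x i) = u i) then ((Fintype.card (Fin n → Fin lam → Bool) : ℝ))⁻¹ else 0)) - Pz z * (∑ i, wt z i * (if ∀ j ∉ J z i, u j = ev (g j) (wv z i j) then (((2:ℝ)^lam')^(J z i).card)⁻¹ else 0))) from by ring]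
          rw [abs_mul, abs_of_nonneg (by positivity : (0:ℝ) ≤ ((Fintype.card H : ℝ)^n)⁻¹)]
      _ = ∑ z : Fin s → Bool, ((Fintype.card H : ℝ)^n)⁻¹ * ∑ g : Fin n → H, (1/2) * ∑ u : Fin n → Fin lam' → Bool, |(∑ x, (if (F x = z ∧ ∀ i, ev (g i) (x i) = u i) then ((Fintype.card (Fin n → Fin lam → Bool) : ℝ))⁻¹ else 0)) - Pz z * (∑ i, wt z i * (if ∀ j ∉ J z i, u j = ev (g j) (wv z i j) then (((2:ℝ)^lam')^(J z i).card)⁻¹ else 0))| := by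
          calc (1/2) * ∑ g : Fin n → H, ∑ z : Fin s → Bool, ∑ u : Fin n → Fin lam' → Bool, ((Fintype.card H : ℝ)^n)⁻¹ * |(∑ x, (if (F x = z ∧ ∀ i, ev (g i) (x i) = u i) then ((Fintype.card (Fin n → Fin lam → Bool) : ℝ))⁻¹ else 0)) - Pz z * (∑ i, wt z i * (if ∀ j ∉ J z i, u j = ev (g j) (wv z i j) then (((2:ℝ)^lam')^(J z i).card)⁻¹ else 0))|
              = ∑ g : Fin n → H, ∑ z : Fin s → Bool, (1/2) * ∑ u : Fin n → Fin lam' → Bool, ((Fintype.card H : ℝ)^n)⁻¹ * |(∑ x, (if (F x = z ∧ ∀ i, ev (g i) (x i) = u i) then ((Fintype.card (Fin n → Fin lam → Bool) : ℝ))⁻¹ else 0)) - Pz z * (∑ i, wt z i * (if ∀ j ∉ J z i, u j = ev (g j) (wv z i j) then (((2:ℝ)^lam')^(J z i).card)⁻¹ else 0))| := by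
                rw [Finset.mul_sum]
                exact Finset.sum_congr rfl fun g _ => Finset.mul_sum _ _ _
            _ = ∑ z : Fin s → Bool, ∑ g : Fin n → H, (1/2) * ∑ u : Fin n → Fin lam' → Bool, ((Fintype.card H : ℝ)^n)⁻¹ * |(∑ x, (if (F x = z ∧ ∀ i, ev (g i) (x i) = u i) then ((Fintype.card (Fin n → Fin lam → Bool) : ℝ))⁻¹ else 0)) - Pz z * (∑ i, wt z i * (if ∀ j ∉ J z i, u j = ev (g j) (wv z i j) then (((2:ℝ)^lam')^(J z i).card)⁻¹ else 0))| := Finset.sum_comm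
            _ = ∑ z : Fin s → Bool, ((Fintype.card H : ℝ)^n)⁻¹ * ∑ g : Fin n → H, (1/2) * ∑ u : Fin n → Fin lam' → Bool, |(∑ x, (if (F x = z ∧ ∀ i, ev (g i) (x i) = u i) then ((Fintype.card (Fin n → Fin lam → Bool) : ℝ))⁻¹ else 0)) - Pz z * (∑ i, wt z i * (if ∀ j ∉ J z i, u j = ev (g j) (wv z i j) then (((2:ℝ)^lam')^(J z i).card)⁻¹ else 0))| := by
                refine Finset.sum_congr rfl fun z _ => ?_
                rw [Finset.mul_sum]
                refine Finset.sum_congr rfl fun g _ => ?_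
                rw [← Finset.mul_sum]
                ring
      _ ≤ ∑ z : Fin s → Bool, (Pz z * (γ + SQ) + (if (0 < Pz z ∧ ¬∀ x, Xz z x ≤ (2 : ℝ) ^ ((s' : ℝ) - ((n * lam : ℕ) : ℝ))) then Pz z else 0)) :=
          Finset.sum_le_sum fun z _ => hkey z
      _ = (γ + SQ) + ∑ z : Fin s → Bool, (if (0 < Pz z ∧ ¬∀ x, Xz z x ≤ (2 : ℝ) ^ ((s' : ℝ) - ((n * lam : ℕ) : ℝ))) then Pz z else 0) := by
          rw [Finset.sum_add_distrib]
          congr 1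
          rw [← Finset.sum_mul, hPzsum, one_mul]
      _ ≤ (γ + SQ) + (2:ℝ)^((s:ℝ)-(s':ℝ)) := by linarith [hbadsum]
      _ ≤ Real.sqrt ((2 : ℝ) ^ (-(1 - δ) * (lam:ℝ) + (lam':ℝ) + Real.logb 2 (n:ℝ))) + γ
          + (2 : ℝ) ^ ((s : ℝ) - (s' : ℝ)) := by linarith [hSQle]
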